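/- Define a 'lock state' as a triple of booleans (rlock, alock, ilock) per fluent, initially all true. An instantaneous action a with read set R(a), assign set A(a), and increase set I(a) is lock-applicable in a lock state L if for all f ∈ R(a), alock_f ∧ ilock_f holds; for all f ∈ A(a), rlock_f ∧ alock_f ∧ ilock_f holds; and for all f ∈ I(a), rlock_f ∧ alock_f holds. Applying a sets rlock_f := false for f ∈ R(a), alock_f := false for f ∈ A(a), ilock_f := false for f ∈ I(a). Then: if a sequence of actions b_0, ..., b_k is executed from the all-true lock state with each b_i lock-applicable in the state resulting from b_0, ..., b_{i-1}, then for all i ≠ j, R(b_i) ∩ (A(b_j) ∪ I(b_j)) = ∅, R(b_j) ∩ (A(b_i) ∪ I(b_i)) = ∅, and A(b_i) ∩ A(b_j) = ∅. -/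
import Mathlib


/-- An instantaneous action, abstracted by its read, assigned and increased fluents. -/
structure LockAction (F : Type*) where
  R : Set F
  A : Set F
  I : Set F

/-- A lock state: for every fluent, the three locks `rlock`, `alock`, `ilock`. -/
structure LockState (F : Type*) where
  rlock : F → Bool
  alock : F → Bool
  ilock : F → Bool

/-- The all-true initial lock state. -/
def LockState.init (F : Type*) : LockState F :=
  ⟨fun _ => true, fun _ => true, fun _ => true⟩

/-- Lock-applicability of an action in a lock state. -/
def lockApplicable {F : Type*} (L : LockState F) (a : LockAction F) : Prop :=
  (∀ f ∈ a.R, L.alock f = true ∧ L.ilock f = true) ∧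
  (∀ f ∈ a.A, L.rlock f = true ∧ L.alock f = true ∧ L.ilock f = true) ∧
  (∀ f ∈ a.I, L.rlock f = true ∧ L.alock f = true)

open Classical in
/-- Lock effects of applying an action. -/
noncomputable def lockApply {F : Type*} (a : LockAction F) (L : LockState F) :
    LockState F where
  rlock f := if f ∈ a.R then false else L.rlock f
  alock f := if f ∈ a.A then false else L.alock f
  ilock f := if f ∈ a.I then false else L.ilock f

/-- Lock state after executing the first `i` actions of `b` from the initial state. -/
noncomputable def lockRun {F : Type*} (b : ℕ → LockAction F) : ℕ → LockState F
  | 0 => LockState.init F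
  | i + 1 => lockApply (b i) (lockRun b i)

lemma lockRun_rlock_mono {F : Type*} (b : ℕ → LockAction F) {m n : ℕ} (h : m ≤ n) (f : F)
    (hf : (lockRun b m).rlock f = false) : (lockRun b n).rlock f = false := by
  induction n with
  | zero => have : m = 0 := by omega
            subst this; exact hf
  | succ n ih =>
    rcases Nat.lt_or_ge m (n+1) with h' | h'
    · have := ih (by omega)
      simp [lockRun, lockApply]
      intro _; exact this
    · have : m = n + 1 := by omega
      subst this; exact hf

lemma lockRun_alock_mono {F : Type*} (b : ℕ → LockAction F) {m n : ℕ} (h : m ≤ n) (f : F)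
    (hf : (lockRun b m).alock f = false) : (lockRun b n).alock f = false := by
  induction n with
  | zero => have : m = 0 := by omega
            subst this; exact hf
  | succ n ih =>
    rcases Nat.lt_or_ge m (n+1) with h' | h'
    · have := ih (by omega)
      simp [lockRun, lockApply]
      intro _; exact this
    · have : m = n + 1 := by omega
      subst this; exact hf

lemma lockRun_ilock_mono {F : Type*} (b : ℕ → LockAction F) {m n : ℕ} (h : m ≤ n) (f : F)
    (hf : (lockRun b m).ilock f = false) : (lockRun b n).ilock f = false := by
  induction n with
  | zero => have : m = 0 := by omega
            subst this; exact hf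
  | succ n ih =>
    rcases Nat.lt_or_ge m (n+1) with h' | h'
    · have := ih (by omega)
      simp [lockRun, lockApply]
      intro _; exact this
    · have : m = n + 1 := by omega
      subst this; exact hf

/-- The three disjointness facts, in the ordered case `i < j`. -/
lemma lock_sound_lt {F : Type*} (b : ℕ → LockAction F) {i j : ℕ} (hij : i < j)
    (hj : lockApplicable (lockRun b j) (b j)) :
    (b i).R ∩ ((b j).A ∪ (b j).I) = ∅ ∧
    (b j).R ∩ ((b i).A ∪ (b i).I) = ∅ ∧
    (b i).A ∩ (b j).A = ∅ := by
  obtain ⟨hR, hA, hI⟩ := hj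
  have hij' : i + 1 ≤ j := hij
  refine ⟨?_, ?_, ?_⟩
  · ext f
    simp only [Set.mem_inter_iff, Set.mem_union, Set.mem_empty_iff_false, iff_false, not_and]
    rintro hfR (hfA | hfI)
    · have h1 : (lockRun b (i+1)).rlock f = false := by
        simp [lockRun, lockApply, hfR]
      have := lockRun_rlock_mono b hij' f h1
      have := (hA f hfA).1
      simp_all
    · have h1 : (lockRun b (i+1)).rlock f = false := by
        simp [lockRun, lockApply, hfR]
      have := lockRun_rlock_mono b hij' f h1
      have := (hI f hfI).1
      simp_all
  · ext f
    simp only [Set.mem_inter_iff, Set.mem_union, Set.mem_empty_iff_false, iff_false, not_and]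
    rintro hfR (hfA | hfI)
    · have h1 : (lockRun b (i+1)).alock f = false := by
        simp [lockRun, lockApply, hfA]
      have := lockRun_alock_mono b hij' f h1
      have := (hR f hfR).1
      simp_all
    · have h1 : (lockRun b (i+1)).ilock f = false := by
        simp [lockRun, lockApply, hfI]
      have := lockRun_ilock_mono b hij' f h1
      have := (hR f hfR).2
      simp_all
  · ext f
    simp only [Set.mem_inter_iff, Set.mem_empty_iff_false, iff_false, not_and]
    intro hfA hfA'
    have h1 : (lockRun b (i+1)).alock f = false := by
      simp [lockRun, lockApply, hfA]
    have := lockRun_alock_mono b hij' f h1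
    have := (hA f hfA').2.1
    simp_all

/-- Soundness of the lock mechanism: if every action in the sequence is
lock-applicable in the lock state produced by its predecessors, then the
actions are pairwise non-interfering. -/
theorem stmt_2 {F : Type*} (k : ℕ) (b : ℕ → LockAction F)
    (happ : ∀ i ≤ k, lockApplicable (lockRun b i) (b i)) :
    ∀ i ≤ k, ∀ j ≤ k, i ≠ j →
      (b i).R ∩ ((b j).A ∪ (b j).I) = ∅ ∧
      (b j).R ∩ ((b i).A ∪ (b i).I) = ∅ ∧
      (b i).A ∩ (b j).A = ∅ := by
  intro i hi j hj hij
  rcases Nat.lt_or_ge i j with h | h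
  · exact lock_sound_lt b h (happ j hj)
  · have h' : j < i := by omega
    obtain ⟨h1, h2, h3⟩ := lock_sound_lt b h' (happ i hi)
    exact ⟨h2, h1, by rw [Set.inter_comm]; exact h3⟩
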